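/- For any recurrent random walk on Z^n (in particular the simple random walk on Z^2), with uniform measure on walks of length N, the ratio δ_N = S_C/S of coarse-grained to fine-grained Shannon entropy satisfies δ_N ≥ 1 − E(R_N)/N, and hence δ_N → 1 as N → ∞ whenever E(R_N)/N → 0. -/

import Mathlib

open Finset

/-- The unit step of a simple walk on `ℤ^n` given a direction `d`. -/
def stepVec (n : ℕ) (d : Fin n × Bool) : Fin n → ℤ :=
  fun j => if j = d.1 then (if d.2 then 1 else -1) else 0

/-- Position after `i` steps of the walk encoded by the step sequence `s`. -/
def pos {n N : ℕ} (s : Fin N → Fin n × Bool) (i : ℕ) : Fin n → ℤ :=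
  ∑ k ∈ Finset.univ.filter (fun k : Fin N => (k : ℕ) < i), stepVec n (s k)

/-- Contact matrix: `1` iff positions at distinct times agree. -/
def cm {n N : ℕ} (s : Fin N → Fin n × Bool) : Fin (N + 1) → Fin (N + 1) → Bool :=
  fun i j => decide ((i : ℕ) ≠ (j : ℕ) ∧ pos s i = pos s j)

/-- Degeneracy: number of walks of length `N` sharing the contact matrix of `s`. -/
def degC {n N : ℕ} (s : Fin N → Fin n × Bool) : ℕ :=
  (Finset.univ.filter (fun s' : Fin N → Fin n × Bool => cm s' = cm s)).card

/-- Range: number of distinct sites visited. -/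
def rangeRW {n N : ℕ} (s : Fin N → Fin n × Bool) : ℕ :=
  (Finset.univ.image (fun i : Fin (N + 1) => pos s (i : ℕ))).card

/-- Number of contact matrices realized by walks of length `N` on `ℤ^n`. -/
def W (n N : ℕ) : ℕ :=
  (Finset.univ.image (fun s : Fin N → Fin n × Bool => cm s)).card

noncomputable def gammaRW (n N : ℕ) : ℝ :=
  Real.log (W n N) / (N * Real.log (2 * n))

/-- Coarse-grained Shannon entropy of the contact-matrix partition, uniform measure. -/
noncomputable def SC (n N : ℕ) : ℝ :=
  ∑ C : Fin (N + 1) → Fin (N + 1) → Bool,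
    Real.negMulLog
      (((Finset.univ.filter (fun s : Fin N → Fin n × Bool => cm s = C)).card : ℝ) / (2 * n) ^ N)

noncomputable def deltaRW (n N : ℕ) : ℝ :=
  SC n N / (N * Real.log (2 * n))

/-- Expected range under the uniform measure. -/
noncomputable def ER (n N : ℕ) : ℝ :=
  (∑ s : Fin N → Fin n × Bool, (rangeRW s : ℝ)) / (2 * n) ^ N

-- auxiliary

lemma stepVec_injective (n : ℕ) : Function.Injective (stepVec n) := by
  rintro ⟨i, b⟩ ⟨j, c⟩ h
  have h1 := congrFun h i
  simp only [stepVec, if_pos rfl] at h1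
  by_cases hij : i = j
  · subst hij
    simp only [if_pos rfl] at h1
    cases b <;> cases c <;> simp_all
  · rw [if_neg hij] at h1
    cases b <;> simp_all

lemma pos_succ {n N : ℕ} (s : Fin N → Fin n × Bool) (i : ℕ) (hi : i < N) :
    pos s (i + 1) = pos s i + stepVec n (s ⟨i, hi⟩) := by
  have hins : (Finset.univ.filter (fun k : Fin N => (k : ℕ) < i + 1))
      = insert (⟨i, hi⟩ : Fin N) (Finset.univ.filter (fun k : Fin N => (k : ℕ) < i)) := by
    ext k
    simp [Fin.ext_iff]
    omega
  have hnot : (⟨i, hi⟩ : Fin N) ∉ Finset.univ.filter (fun k : Fin N => (k : ℕ) < i) := by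
    simp
  rw [pos, hins, Finset.sum_insert hnot, pos, add_comm]

lemma cm_true_iff {n N : ℕ} (s : Fin N → Fin n × Bool) (i j : Fin (N + 1)) :
    cm s i j = true ↔ ((i : ℕ) ≠ (j : ℕ) ∧ pos s i = pos s j) := by
  simp [cm]

def freshSet {N : ℕ} (C : Fin (N + 1) → Fin (N + 1) → Bool) : Finset (Fin N) :=
  Finset.univ.filter (fun k => ∀ j : Fin (N + 1), (j : ℕ) ≤ (k : ℕ) → C k.succ j = false)

lemma eq_of_cm_eq_of_agree {n N : ℕ} {s t : Fin N → Fin n × Bool} (hC : cm s = cm t)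
    (hstep : ∀ k ∈ freshSet (cm s), s k = t k) : s = t := by
  have hpos : ∀ i : ℕ, i ≤ N → pos s i = pos t i := by
    intro i
    induction i using Nat.strong_induction_on with
    | _ i ih =>
      match i with
      | 0 => intro _; simp [pos]
      | (i + 1) =>
        intro hiN
        have hi : i < N := hiN
        have hposi := ih i (Nat.lt_succ_self i) (le_of_lt hi)
        by_cases hf : (⟨i, hi⟩ : Fin N) ∈ freshSet (cm s)
        · rw [pos_succ s i hi, pos_succ t i hi, hposi, hstep _ hf]
        · simp only [freshSet, mem_filter, mem_univ, true_and, not_forall] at hf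
          obtain ⟨j, hj, hCj⟩ := hf
          rw [Bool.not_eq_false] at hCj
          have h1 := (cm_true_iff s _ j).1 hCj
          have hCj' : cm t (⟨i, hi⟩ : Fin N).succ j = true := by rw [← hC]; exact hCj
          have h2 := (cm_true_iff t _ j).1 hCj'
          have hv : ((⟨i, hi⟩ : Fin N).succ : ℕ) = i + 1 := rfl
          rw [hv] at h1 h2
          have hjN : (j : ℕ) ≤ N := Nat.lt_succ_iff.mp j.isLt
          have hjlt : (j : ℕ) < i + 1 := Nat.lt_succ_of_le hj
          rw [h1.2, h2.2]
          exact ih (j : ℕ) hjlt hjN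
  funext k
  apply stepVec_injective n
  have h1 := pos_succ s (k : ℕ) k.isLt
  have h2 := pos_succ t (k : ℕ) k.isLt
  rw [Fin.eta] at h1 h2
  have e1 : stepVec n (s k) = pos s ((k : ℕ) + 1) - pos s (k : ℕ) := by
    rw [h1]; abel
  have e2 : stepVec n (t k) = pos t ((k : ℕ) + 1) - pos t (k : ℕ) := by
    rw [h2]; abel
  have hA : pos s ((k : ℕ) + 1) = pos t ((k : ℕ) + 1) := hpos _ k.isLt
  rw [e1, e2, hA, hpos _ (le_of_lt k.isLt)]

lemma degC_pos {n N : ℕ} (s : Fin N → Fin n × Bool) : 0 < degC s := by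
  rw [degC]
  exact Finset.card_pos.2 ⟨s, by simp⟩

lemma freshSet_card_le {n N : ℕ} (s : Fin N → Fin n × Bool) :
    (freshSet (cm s)).card ≤ rangeRW s := by
  rw [rangeRW]
  apply Finset.card_le_card_of_injOn (fun k : Fin N => pos s ((k : ℕ) + 1))
  · intro k _
    exact Finset.mem_image.2 ⟨k.succ, Finset.mem_univ _, rfl⟩
  · intro a ha b hb hab
    simp only [freshSet, Finset.coe_filter, Set.mem_setOf_eq, Finset.mem_univ, true_and] at ha hb
    by_contra hne
    have hne' : (a : ℕ) ≠ (b : ℕ) := fun h => hne (Fin.ext h)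
    rcases lt_or_gt_of_ne hne' with h | h
    · have h2 := hb a.succ (by simp [Fin.val_succ]; omega)
      rw [← Bool.not_eq_true, cm_true_iff] at h2
      exact h2 ⟨by simp [Fin.val_succ]; omega, by simpa [Fin.val_succ] using hab.symm⟩
    · have h2 := ha b.succ (by simp [Fin.val_succ]; omega)
      rw [← Bool.not_eq_true, cm_true_iff] at h2
      exact h2 ⟨by simp [Fin.val_succ]; omega, by simpa [Fin.val_succ] using hab⟩

lemma degC_le {n N : ℕ} (s : Fin N → Fin n × Bool) :
    degC s ≤ (2 * n) ^ (freshSet (cm s)).card := by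
  classical
  rw [degC]
  have h := Finset.card_le_card_of_injOn
    (f := fun t : Fin N → Fin n × Bool => fun k : {x // x ∈ freshSet (cm s)} => t k.1)
    (s := Finset.univ.filter (fun s' : Fin N → Fin n × Bool => cm s' = cm s))
    (t := Finset.univ) (fun _ _ => Finset.mem_univ _) ?_
  · calc _ ≤ _ := h
      _ = (2 * n) ^ (freshSet (cm s)).card := by
        rw [Finset.card_univ, Fintype.card_fun]
        simp [Fintype.card_prod, mul_comm]
  · intro a ha b hb hfe
    simp only [Finset.coe_filter, Set.mem_setOf_eq, Finset.mem_univ, true_and] at ha hb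
    apply eq_of_cm_eq_of_agree (ha.trans hb.symm)
    intro k hk
    rw [ha] at hk
    exact congrFun hfe ⟨k, hk⟩


lemma negMulLog_nat_div (m : ℕ) {Q : ℝ} (hQ : 0 < Q) :
    Real.negMulLog ((m : ℝ) / Q) = ((m : ℝ) / Q) * (Real.log Q - Real.log m) := by
  rcases Nat.eq_zero_or_pos m with h | h
  · simp [h, Real.negMulLog]
  · have hm : (0 : ℝ) < m := by exact_mod_cast h
    rw [Real.negMulLog, Real.log_div (ne_of_gt hm) (ne_of_gt hQ)]
    ring

lemma SC_eq (n N : ℕ) (hn : 1 ≤ n) :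
    SC n N = ∑ s : Fin N → Fin n × Bool,
      (Real.log ((2 * (n : ℝ)) ^ N) - Real.log (degC s)) / (2 * (n : ℝ)) ^ N := by
  have hn1 : (1 : ℝ) ≤ (n : ℝ) := by exact_mod_cast hn
  have hQ : (0 : ℝ) < (2 * (n : ℝ)) ^ N := pow_pos (by linarith) N
  rw [SC, ← Finset.sum_fiberwise (Finset.univ) (fun s : Fin N → Fin n × Bool => cm s)
      (fun s => (Real.log ((2 * (n : ℝ)) ^ N) - Real.log (degC s)) / (2 * (n : ℝ)) ^ N)]
  apply Finset.sum_congr rfl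
  intro C _
  rw [negMulLog_nat_div _ hQ]
  have hcong : ∀ s ∈ Finset.univ.filter (fun s : Fin N → Fin n × Bool => cm s = C),
      (Real.log ((2 * (n : ℝ)) ^ N) - Real.log (degC s)) / (2 * (n : ℝ)) ^ N
      = (Real.log ((2 * (n : ℝ)) ^ N) -
          Real.log ((Finset.univ.filter (fun s' : Fin N → Fin n × Bool => cm s' = C)).card))
          / (2 * (n : ℝ)) ^ N := by
    intro s hs
    have hcs : cm s = C := (Finset.mem_filter.1 hs).2
    rw [degC, hcs]
  rw [Finset.sum_congr rfl hcong, Finset.sum_const, nsmul_eq_mul]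
  ring


open Filter in
/-- With the uniform measure on walks of length `N` on `ℤ^n`, the ratio
`δ_N = S_C / S` satisfies `δ_N ≥ 1 - E(R_N)/N`; hence `δ_N → 1` whenever
`E(R_N)/N → 0` (e.g. for recurrent walks such as SRW on `ℤ²`). -/
theorem deltaRW_ge_one_sub_expected_range (n : ℕ) (hn : 1 ≤ n) :
    (∀ N : ℕ, 1 ≤ N → deltaRW n N ≥ 1 - ER n N / N) ∧
      (Tendsto (fun N => ER n N / N) atTop (nhds 0) →
        Tendsto (fun N => deltaRW n N) atTop (nhds 1)) := by
  have hn1 : (1 : ℝ) ≤ (n : ℝ) := by exact_mod_cast hn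
  have hL : 0 < Real.log (2 * (n : ℝ)) := Real.log_pos (by linarith)
  have key : ∀ N : ℕ, 1 ≤ N → (1 - ER n N / N ≤ deltaRW n N ∧ deltaRW n N ≤ 1) := by
    intro N hN
    have hQ : (0 : ℝ) < (2 * (n : ℝ)) ^ N := pow_pos (by linarith) N
    have hNR : (0 : ℝ) < (N : ℝ) := by exact_mod_cast hN
    have hcard : ((Fintype.card (Fin N → Fin n × Bool) : ℝ)) = (2 * (n : ℝ)) ^ N := by
      rw [Fintype.card_fun]
      simp only [Fintype.card_prod, Fintype.card_fin, Fintype.card_bool]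
      push_cast
      ring
    set L := Real.log (2 * (n : ℝ)) with hLdef
    have hlogQ : Real.log ((2 * (n : ℝ)) ^ N) = N * L := by rw [Real.log_pow]
    -- termwise lower bound
    have hterm_lo : ∀ s : Fin N → Fin n × Bool,
        ((N : ℝ) * L - (rangeRW s : ℝ) * L) / (2 * (n : ℝ)) ^ N
          ≤ (Real.log ((2 * (n : ℝ)) ^ N) - Real.log (degC s)) / (2 * (n : ℝ)) ^ N := by
      intro s
      rw [div_le_div_iff_of_pos_right hQ]
      rw [hlogQ]
      have hd : (degC s : ℝ) ≤ (2 * (n : ℝ)) ^ rangeRW s := by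
        have h1 : degC s ≤ (2 * n) ^ rangeRW s :=
          (degC_le s).trans (Nat.pow_le_pow_right (by omega) (freshSet_card_le s))
        calc (degC s : ℝ) ≤ (((2 * n) ^ rangeRW s : ℕ) : ℝ) := by exact_mod_cast h1
          _ = (2 * (n : ℝ)) ^ rangeRW s := by push_cast; ring
      have h2 : Real.log (degC s) ≤ (rangeRW s : ℝ) * L := by
        calc Real.log (degC s) ≤ Real.log ((2 * (n : ℝ)) ^ rangeRW s) :=
              Real.log_le_log (by exact_mod_cast degC_pos s) hd
          _ = (rangeRW s : ℝ) * L := by rw [Real.log_pow]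
      linarith
    have hD : 0 < (N : ℝ) * L := mul_pos hNR hL
    have hsum_lo : ((N : ℝ) - ER n N) * L ≤ SC n N := by
      rw [SC_eq n N hn]
      have step1 : ((N : ℝ) - ER n N) * L
          = ∑ s : Fin N → Fin n × Bool,
              ((N : ℝ) * L - (rangeRW s : ℝ) * L) / (2 * (n : ℝ)) ^ N := by
        rw [← Finset.sum_div, Finset.sum_sub_distrib, Finset.sum_const, Finset.card_univ,
          ← Finset.sum_mul, nsmul_eq_mul, hcard, ER]
        field_simp
      rw [step1]
      exact Finset.sum_le_sum (fun s _ => hterm_lo s)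
    have hsum_hi : SC n N ≤ (N : ℝ) * L := by
      rw [SC_eq n N hn]
      have hb : ∀ s : Fin N → Fin n × Bool,
          (Real.log ((2 * (n : ℝ)) ^ N) - Real.log (degC s)) / (2 * (n : ℝ)) ^ N
            ≤ ((N : ℝ) * L) / (2 * (n : ℝ)) ^ N := by
        intro s
        rw [div_le_div_iff_of_pos_right hQ, hlogQ]
        have : (0 : ℝ) ≤ Real.log (degC s) :=
          Real.log_natCast_nonneg _
        linarith
      calc _ ≤ ∑ _s : Fin N → Fin n × Bool, ((N : ℝ) * L) / (2 * (n : ℝ)) ^ N :=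
            Finset.sum_le_sum (fun s _ => hb s)
        _ = (N : ℝ) * L := by
            rw [Finset.sum_const, Finset.card_univ, nsmul_eq_mul, hcard]
            field_simp
    constructor
    · have heq : 1 - ER n N / N = (((N : ℝ) - ER n N) * L) / ((N : ℝ) * L) := by
        rw [mul_div_mul_right _ _ (ne_of_gt hL)]
        field_simp
      rw [deltaRW, ← hLdef, heq]
      exact (div_le_div_iff_of_pos_right hD).2 hsum_lo
    · rw [deltaRW, ← hLdef, div_le_one hD]
      exact hsum_hi
  refine ⟨fun N hN => (key N hN).1, fun h => ?_⟩
  have h1 : Tendsto (fun N : ℕ => 1 - ER n N / N) atTop (nhds 1) := by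
    have h2 := (tendsto_const_nhds (x := (1 : ℝ)) (f := (atTop : Filter ℕ))).sub h
    simpa using h2
  refine tendsto_of_tendsto_of_tendsto_of_le_of_le' h1 tendsto_const_nhds ?_ ?_
  · filter_upwards [eventually_ge_atTop 1] with N hN using (key N hN).1
  · filter_upwards [eventually_ge_atTop 1] with N hN using (key N hN).2
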